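/- Let f : ℝ^d → ℝ be Lipschitz continuous, Diff its set of differentiability points, e_m the m-th standard basis vector, and L_m = sup_{κ∈Diff} |∇f(κ)ᵀe_m| for m = 1,…,d. Then for all κ₁, κ₂ ∈ ℝ^d, |f(κ₁) − f(κ₂)| ≤ ∑_{m=1}^d L_m |κ₁(m) − κ₂(m)|. -/

import Mathlib

open MeasureTheory Measure Filter Topology Metric
open scoped Convolution

section Aux

variable {d : ℕ}

lemma aux_inner_grad (f : EuclideanSpace ℝ (Fin d) → ℝ) (κ v : EuclideanSpace ℝ (Fin d)) :
    (inner ℝ (gradient f κ) v : ℝ) = fderiv ℝ f κ v := by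
  simp [gradient, InnerProductSpace.toDual_symm_apply]

lemma aux_norm_grad (f : EuclideanSpace ℝ (Fin d) → ℝ) (κ : EuclideanSpace ℝ (Fin d)) :
    ‖gradient f κ‖ = ‖fderiv ℝ f κ‖ := by
  simp [gradient]

end Aux

set_option maxHeartbeats 1000000 in
theorem stmt13 {d : ℕ} (f : EuclideanSpace ℝ (Fin d) → ℝ) (K : NNReal)
    (hf : LipschitzWith K f) (L : Fin d → ℝ)
    (hL : ∀ m : Fin d, L m = sSup {x : ℝ | ∃ κ, DifferentiableAt ℝ f κ ∧
      x = |(inner ℝ (gradient f κ) (EuclideanSpace.single m (1 : ℝ)) : ℝ)|}) :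
    ∀ κ₁ κ₂ : EuclideanSpace ℝ (Fin d),
      |f κ₁ - f κ₂| ≤ ∑ m, L m * |κ₁ m - κ₂ m| := by
  classical
  set e : Fin d → EuclideanSpace ℝ (Fin d) := fun m => EuclideanSpace.single m (1 : ℝ) with he
  have hbdd : ∀ m : Fin d, BddAbove {x : ℝ | ∃ κ, DifferentiableAt ℝ f κ ∧
      x = |(inner ℝ (gradient f κ) (EuclideanSpace.single m (1 : ℝ)) : ℝ)|} := by
    intro m
    refine ⟨(K : ℝ), ?_⟩
    rintro x ⟨κ, hκ, rfl⟩
    calc |(inner ℝ (gradient f κ) (EuclideanSpace.single m (1 : ℝ)) : ℝ)|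
        ≤ ‖gradient f κ‖ * ‖EuclideanSpace.single m (1 : ℝ)‖ := abs_real_inner_le_norm _ _
      _ = ‖fderiv ℝ f κ‖ := by
          rw [aux_norm_grad, EuclideanSpace.norm_single]; simp
      _ ≤ (K : ℝ) := norm_fderiv_le_of_lipschitz ℝ hf
  have key : ∀ (m : Fin d) (κ : EuclideanSpace ℝ (Fin d)), DifferentiableAt ℝ f κ → |fderiv ℝ f κ (e m)| ≤ L m := by
    intro m κ hκ
    rw [hL m]
    refine le_csSup (hbdd m) ⟨κ, hκ, ?_⟩
    rw [aux_inner_grad]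
  have hLnn : ∀ m : Fin d, 0 ≤ L m := by
    intro m
    obtain ⟨κ₀, hκ₀⟩ := (hf.ae_differentiableAt (μ := volume)).exists
    exact le_trans (abs_nonneg _) (key m κ₀ hκ₀)
  have aeL : ∀ m : Fin d, ∀ᵐ κ : EuclideanSpace ℝ (Fin d), |lineDeriv ℝ f κ (e m)| ≤ L m := by
    intro m
    filter_upwards [hf.ae_differentiableAt] with κ hκ
    rw [hκ.lineDeriv_eq_fderiv]
    exact key m κ hκ
  intro κ₁ κ₂
  set S := ∑ m, L m * |κ₁ m - κ₂ m| with hS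
  have hSnn : 0 ≤ S := Finset.sum_nonneg fun m _ =>
    mul_nonneg (hLnn m) (abs_nonneg _)
  -- main estimate with a mollifier of radius ε
  have main : ∀ ε : ℝ, 0 < ε → |f κ₁ - f κ₂| ≤ S + 2 * K * ε := by
    intro ε hε
    set φ : ContDiffBump (0 : EuclideanSpace ℝ (Fin d)) := ⟨ε/2, ε, by positivity, by linarith⟩ with hφ
    set ψ : EuclideanSpace ℝ (Fin d) → ℝ := φ.normed volume with hψ
    have hψc : ContDiff ℝ 1 ψ := φ.contDiff_normed
    have hψcs : HasCompactSupport ψ := φ.hasCompactSupport_normed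
    have hloc : LocallyIntegrable f volume := hf.continuous.locallyIntegrable
    set fε : EuclideanSpace ℝ (Fin d) → ℝ := f ⋆[ContinuousLinearMap.mul ℝ ℝ, volume] ψ with hfε
    have hderiv : ∀ x : EuclideanSpace ℝ (Fin d), HasFDerivAt fε
        ((f ⋆[(ContinuousLinearMap.mul ℝ ℝ).precompR (EuclideanSpace ℝ (Fin d)), volume] fderiv ℝ ψ) x) x :=
      fun x => hψcs.hasFDerivAt_convolution_right _ hloc hψc x
    set D : EuclideanSpace ℝ (Fin d) → EuclideanSpace ℝ (Fin d) →L[ℝ] ℝ :=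
      f ⋆[(ContinuousLinearMap.mul ℝ ℝ).precompR (EuclideanSpace ℝ (Fin d)), volume] fderiv ℝ ψ with hD
    -- value of the derivative in a basis direction
    have hDapp : ∀ (x : EuclideanSpace ℝ (Fin d)) (m : Fin d),
        D x (e m) = ∫ t, f t * fderiv ℝ ψ (x - t) (e m) := by
      intro x m
      rw [hD, convolution_precompR_apply _ hloc (hψcs.fderiv ℝ)
        (hψc.continuous_fderiv one_ne_zero) x (e m), convolution_def]
      rfl
    -- integration by parts
    have ibp : ∀ (x : EuclideanSpace ℝ (Fin d)) (m : Fin d),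
        ∫ t, f t * fderiv ℝ ψ (x - t) (e m)
          = ∫ t, lineDeriv ℝ f t (e m) * ψ (x - t) := by
      intro x m
      have hgc : HasCompactSupport (fun y : EuclideanSpace ℝ (Fin d) => ψ (x - y)) :=
        hψcs.comp_homeomorph (Homeomorph.subLeft x)
      have hgs : ContDiff ℝ 1 (fun y : EuclideanSpace ℝ (Fin d) => ψ (x - y)) :=
        hψc.comp (contDiff_const.sub contDiff_id)
      obtain ⟨Dg, hgl⟩ := ContDiff.lipschitzWith_of_hasCompactSupport hgc hgs one_ne_zero
      have h := hf.integral_lineDeriv_mul_eq (μ := volume) hgl hgc (e m)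
      have hld : ∀ y : EuclideanSpace ℝ (Fin d),
          lineDeriv ℝ (fun y : EuclideanSpace ℝ (Fin d) => ψ (x - y)) y (-(e m))
            = fderiv ℝ ψ (x - y) (e m) := by
        intro y
        have hφd : HasFDerivAt ψ (fderiv ℝ ψ (x - y)) (x - y) :=
          (hψc.differentiable one_ne_zero (x - y)).hasFDerivAt
        have hc : HasDerivAt (fun t : ℝ => (x - y) + t • (e m)) (e m) 0 := by
          simpa using ((hasDerivAt_id (0 : ℝ)).smul_const (e m)).const_add (x - y)
        have hφd' : HasFDerivAt ψ (fderiv ℝ ψ (x - y)) ((x - y) + (0:ℝ) • (e m)) := by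
          simpa using hφd
        have hcomp := hφd'.comp_hasDerivAt 0 hc
        have heq : (fun t : ℝ => ψ (x - (y + t • (-(e m)))))
            = fun t : ℝ => ψ ((x - y) + t • (e m)) := by
          funext t; congr 1; module
        have hline : HasLineDerivAt ℝ (fun y : EuclideanSpace ℝ (Fin d) => ψ (x - y))
            ((fderiv ℝ ψ (x - y)) (e m)) y (-(e m)) := by
          show HasDerivAt (fun t : ℝ => ψ (x - (y + t • (-(e m))))) _ 0
          rw [heq]
          exact hcomp
        exact hline.lineDeriv
      calc ∫ t, f t * fderiv ℝ ψ (x - t) (e m)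
          = ∫ t, lineDeriv ℝ (fun y : EuclideanSpace ℝ (Fin d) => ψ (x - y)) t (-(e m)) * f t := by
            simp only [hld]; simp_rw [mul_comm]
        _ = ∫ t, lineDeriv ℝ f t (e m) * ψ (x - t) := h.symm
    -- bound on directional derivatives of fε
    have hbound : ∀ (x : EuclideanSpace ℝ (Fin d)) (m : Fin d), |D x (e m)| ≤ L m := by
      intro x m
      rw [hDapp, ibp]
      have hint : Integrable (fun t => lineDeriv ℝ f t (e m) * ψ (x - t)) volume := by
        have h1 : Integrable (fun t : EuclideanSpace ℝ (Fin d) => ψ (x - t)) volume := by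
          have := hψc.continuous.integrable_of_hasCompactSupport hψcs (μ := volume)
          exact this.comp_sub_left x
        exact (h1.smul_of_top_left (hf.memLp_lineDeriv (e m))).congr
          (Filter.Eventually.of_forall fun t => mul_comm _ _)
      have h1 : Integrable (fun t : EuclideanSpace ℝ (Fin d) => ψ (x - t)) volume := by
        have := hψc.continuous.integrable_of_hasCompactSupport hψcs (μ := volume)
        exact this.comp_sub_left x
      calc |∫ t, lineDeriv ℝ f t (e m) * ψ (x - t)|
          ≤ ∫ t, |lineDeriv ℝ f t (e m) * ψ (x - t)| := by
            simpa only [Real.norm_eq_abs] using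
              norm_integral_le_integral_norm (μ := volume)
                (fun t => lineDeriv ℝ f t (e m) * ψ (x - t))
        _ ≤ ∫ t, L m * ψ (x - t) := by
            refine integral_mono_ae hint.abs (h1.const_mul _) ?_
            filter_upwards [aeL m] with t ht
            rw [abs_mul, abs_of_nonneg (φ.nonneg_normed _)]
            exact mul_le_mul_of_nonneg_right ht (φ.nonneg_normed _)
        _ = L m := by
            rw [MeasureTheory.integral_const_mul, integral_sub_left_eq_self ψ volume x,
              φ.integral_normed, mul_one]
    -- MVT along the segment
    have hmvt : |fε κ₁ - fε κ₂| ≤ S := by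
      set v : EuclideanSpace ℝ (Fin d) := κ₁ - κ₂ with hv
      have hvm : ∀ m, v m = κ₁ m - κ₂ m := fun m => rfl
      have hvdecomp : v = ∑ m, v m • e m := by
        have hb := (EuclideanSpace.basisFun (Fin d) ℝ).sum_repr v
        simp only [EuclideanSpace.basisFun_repr, EuclideanSpace.basisFun_apply] at hb
        exact hb.symm
      have hDv : ∀ x, |D x v| ≤ S := by
        intro x
        conv_lhs => rw [hvdecomp]
        rw [_root_.map_sum]
        simp only [ContinuousLinearMap.map_smul, smul_eq_mul]
        calc |∑ m, v m * D x (e m)| ≤ ∑ m, |v m * D x (e m)| :=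
              Finset.abs_sum_le_sum_abs _ _
          _ ≤ S := by
            rw [hS]
            apply Finset.sum_le_sum
            intro m _
            rw [abs_mul, hvm, mul_comm]
            exact mul_le_mul_of_nonneg_right (hbound x m) (abs_nonneg _)
      have hcurve : ∀ t : ℝ, HasDerivAt (fun t : ℝ => fε (κ₂ + t • v)) (D (κ₂ + t • v) v) t := by
        intro t
        have hc : HasDerivAt (fun t : ℝ => κ₂ + t • v) v t := by
          simpa using ((hasDerivAt_id t).smul_const v).const_add κ₂
        exact (hderiv (κ₂ + t • v)).comp_hasDerivAt t hc
      have hseg := norm_image_sub_le_of_norm_deriv_le_segment'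
        (f := fun t : ℝ => fε (κ₂ + t • v)) (f' := fun t : ℝ => D (κ₂ + t • v) v)
        (a := 0) (b := 1) (C := S)
        (fun t _ => (hcurve t).hasDerivWithinAt)
        (fun t _ => by simpa [Real.norm_eq_abs] using hDv (κ₂ + t • v))
        1 (Set.right_mem_Icc.2 zero_le_one)
      have h10 : κ₂ + (1 : ℝ) • v = κ₁ := by rw [hv]; module
      have h00 : κ₂ + (0 : ℝ) • v = κ₂ := by rw [hv]; module
      simpa [Real.norm_eq_abs, h10, h00, hv, add_sub_cancel] using hseg
    -- closeness of fε and f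
    have hclose : ∀ x : EuclideanSpace ℝ (Fin d), |fε x - f x| ≤ K * ε := by
      intro x
      have hint1 : Integrable (fun y : EuclideanSpace ℝ (Fin d) => f (x - y) * ψ y) volume := by
        apply Continuous.integrable_of_hasCompactSupport
        · exact (hf.continuous.comp (continuous_const.sub continuous_id)).mul hψc.continuous
        · exact hψcs.mul_left
      have hint2 : Integrable (fun y : EuclideanSpace ℝ (Fin d) => f x * ψ y) volume :=
        (φ.integrable_normed).const_mul _
      have h1 : fε x = ∫ y, f (x - y) * ψ y := by
        rw [hfε, convolution_def]
        simp only [ContinuousLinearMap.mul_apply']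
        rw [← integral_sub_left_eq_self (fun t => f t * ψ (x - t)) volume x]
        simp
      have h2 : f x = ∫ y, f x * ψ y := by
        rw [MeasureTheory.integral_const_mul, φ.integral_normed, mul_one]
      rw [h1, h2, ← integral_sub hint1 hint2]
      have hptwise : ∀ y : EuclideanSpace ℝ (Fin d),
          |f (x - y) * ψ y - f x * ψ y| ≤ (K * ε) * ψ y := by
        intro y
        rw [← sub_mul, abs_mul, abs_of_nonneg (φ.nonneg_normed _)]
        rcases eq_or_ne (ψ y) 0 with h | h
        · simp only [hψ] at h ⊢
          rw [h, mul_zero, mul_zero]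
        · have hy : y ∈ Metric.ball (0 : EuclideanSpace ℝ (Fin d)) ε := by
            have hsupp := Function.mem_support.2 h
            rw [hψ, φ.support_normed_eq] at hsupp
            exact hsupp
          have hyn : ‖y‖ ≤ ε := by
            have := mem_ball_iff_norm.1 hy
            simpa using this.le
          have hdist : |f (x - y) - f x| ≤ (K : ℝ) * ε := by
            have hlip := hf.dist_le_mul (x - y) x
            rw [Real.dist_eq] at hlip
            refine hlip.trans ?_
            have : dist (x - y) x ≤ ε := by
              rw [dist_eq_norm]; simpa using hyn
            exact mul_le_mul_of_nonneg_left this K.coe_nonneg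
          exact mul_le_mul_of_nonneg_right hdist (φ.nonneg_normed _)
      calc |∫ y, (f (x - y) * ψ y - f x * ψ y)|
          ≤ ∫ y, |f (x - y) * ψ y - f x * ψ y| := by
            simpa only [Real.norm_eq_abs] using
              norm_integral_le_integral_norm (μ := volume)
                (fun y => f (x - y) * ψ y - f x * ψ y)
        _ ≤ ∫ y, (K * ε : ℝ) * ψ y :=
            integral_mono (hint1.sub hint2).abs ((φ.integrable_normed).const_mul _)
              hptwise
        _ = K * ε := by
          rw [MeasureTheory.integral_const_mul, φ.integral_normed, mul_one]
    calc |f κ₁ - f κ₂|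
        ≤ |f κ₁ - fε κ₁| + |fε κ₁ - fε κ₂| + |fε κ₂ - f κ₂| := by
          have := abs_sub_le (f κ₁) (fε κ₁) (f κ₂)
          have h2 := abs_sub_le (fε κ₁) (fε κ₂) (f κ₂)
          calc |f κ₁ - f κ₂| ≤ |f κ₁ - fε κ₁| + |fε κ₁ - f κ₂| := abs_sub_le _ _ _
            _ ≤ |f κ₁ - fε κ₁| + (|fε κ₁ - fε κ₂| + |fε κ₂ - f κ₂|) := by
                exact add_le_add_right (abs_sub_le _ _ _) _
            _ = _ := by ring
      _ ≤ K * ε + S + K * ε := by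
          have h1 : |f κ₁ - fε κ₁| ≤ K * ε := by rw [abs_sub_comm]; exact hclose κ₁
          gcongr
          exact hclose κ₂
      _ = S + 2 * K * ε := by ring
  -- conclude
  refine le_of_forall_pos_le_add ?_
  intro δ hδ
  have hK1 : (0:ℝ) < 2 * K + 1 := by positivity
  have := main (δ / (2 * K + 1)) (by positivity)
  refine this.trans ?_
  have h2 : 2 * (K : ℝ) * (δ / (2 * K + 1)) ≤ δ := by
    rw [mul_div_assoc']
    rw [div_le_iff₀ hK1]
    nlinarith [K.coe_nonneg, hδ.le]
  linarith
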